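/- arXiv:2006.14816 — 3 statements merged into one kernel-verified Lean document; each statement's English description precedes it below -/
import Mathlib

section
/- A random variable T with values in [0, ∞] is a stopping time of the single jump filtration 𝔽 (i.e. {T ≤ t} ∈ 𝒻_t for all t ∈ ℝ₊) if and only if it satisfies the following property: if the set {T < γ} is nonempty, then there exists a real number r such that {T < γ} = {T = r < γ} = {r < γ}. -/
open MeasureTheory Filter Set Topology
open scoped ENNReal NNReal Classical

noncomputable section

namespace SingleJump

variable {Ω : Type*}

/-- The event `{γ > t}`. -/
def jumpSet (γ : Ω → ℝ≥0∞) (t : ℝ≥0) : Set Ω := {ω | (t : ℝ≥0∞) < γ ω}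

/-- The collection `𝒻_t` of the single jump filtration generated by `γ` and the σ-field `m`:
`A ∈ 𝒻_t` iff `A` is `m`-measurable and `A ∩ {γ > t}` is either `∅` or `{γ > t}`. -/
def jumpColl (m : MeasurableSpace Ω) (γ : Ω → ℝ≥0∞) (t : ℝ≥0) : Set (Set Ω) :=
  {A | MeasurableSet[m] A ∧ (A ∩ jumpSet γ t = ∅ ∨ A ∩ jumpSet γ t = jumpSet γ t)}

/-- `𝒻_t` as a σ-field (the collection `jumpColl` generates itself, see Proposition 1(i)). -/
def jumpσ (m : MeasurableSpace Ω) (γ : Ω → ℝ≥0∞) (t : ℝ≥0) : MeasurableSpace Ω :=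
  MeasurableSpace.generateFrom (jumpColl m γ t)

/-- `𝒻_∞ = σ(⋃_{t ∈ ℝ₊} 𝒻_t)`. -/
def jumpσInf (m : MeasurableSpace Ω) (γ : Ω → ℝ≥0∞) : MeasurableSpace Ω :=
  ⨆ t : ℝ≥0, jumpσ m γ t

/-- A real function on `ℝ≥0` is càdlàg: right-continuous everywhere, finite left limits. -/
def Cadlag (f : ℝ≥0 → ℝ) : Prop :=
  (∀ t, ContinuousWithinAt f (Ici t) t) ∧
    ∀ t : ℝ≥0, 0 < t → ∃ c : ℝ, Tendsto f (𝓝[<] t) (𝓝 c)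

/-- The filter of times `t ∈ ℝ≥0` with `t ↑ a` strictly from the left (this is `atTop`
when `a = ∞`). -/
def leftF (a : ℝ≥0∞) : Filter ℝ≥0 := Filter.comap (fun t : ℝ≥0 => (t : ℝ≥0∞)) (𝓝[<] a)

/-- Total variation of `f` over `[0,∞)`, including `|f 0|` (the paper's convention `Var`). -/
def totalVar (f : ℝ≥0 → ℝ) : ℝ≥0∞ := (‖f 0‖₊ : ℝ≥0∞) + eVariationOn f Set.univ

/-- The process `M` stopped at the (possibly infinite) random time `T`. -/
def stopped (M : ℝ≥0 → Ω → ℝ) (T : Ω → ℝ≥0∞) : ℝ≥0 → Ω → ℝ :=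
  fun t ω => M (((t : ℝ≥0∞) ⊓ T ω).toNNReal) ω

section WithMeasurableSpace

variable [m : MeasurableSpace Ω]

/-- `Ḡ(t) = 1 - G(t) = P(γ > t)`. -/
def Gbar (μ : Measure Ω) (γ : Ω → ℝ≥0∞) (t : ℝ≥0) : ℝ :=
  (μ {ω | (t : ℝ≥0∞) < γ ω}).toReal

/-- `Ḡ(t-) = P(γ ≥ t)`, the left-hand limit of `Ḡ` at `t`. -/
def GbarLeft (μ : Measure Ω) (γ : Ω → ℝ≥0∞) (t : ℝ≥0) : ℝ :=
  (μ {ω | (t : ℝ≥0∞) ≤ γ ω}).toReal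

/-- `t_G = sup {t ∈ ℝ₊ : G(t) < 1}`, the right endpoint of the law of `γ`. -/
def tG (μ : Measure Ω) (γ : Ω → ℝ≥0∞) : ℝ≥0∞ :=
  sSup ((fun t : ℝ≥0 => (t : ℝ≥0∞)) '' {t : ℝ≥0 | μ {ω | γ ω ≤ (t : ℝ≥0∞)} < 1})

/-- `𝒯 = {t ∈ ℝ₊ : P(γ ≥ t) > 0}`. -/
def TT (μ : Measure Ω) (γ : Ω → ℝ≥0∞) : Set ℝ≥0 :=
  {t | 0 < μ {ω | (t : ℝ≥0∞) ≤ γ ω}}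

/-- Case A: `P(γ = t_G < ∞) = 0`. -/
def CaseA (μ : Measure Ω) (γ : Ω → ℝ≥0∞) : Prop :=
  μ {ω | γ ω = tG μ γ ∧ tG μ γ < ⊤} = 0

/-- Case B: `P(γ = t_G < ∞) > 0`. -/
def CaseB (μ : Measure Ω) (γ : Ω → ℝ≥0∞) : Prop :=
  0 < μ {ω | γ ω = tG μ γ ∧ tG μ γ < ⊤}

/-- `z ∈ L¹_loc(dG)` : `z` is Borel and `∫_{[0,t]} |z(s)| dG(s) < ∞` for every `t ∈ 𝒯`,
where `dG` is the law of `γ` (a measure on `[0,∞]`). -/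
def MemL1loc (μ : Measure Ω) (γ : Ω → ℝ≥0∞) (z : ℝ≥0 → ℝ) : Prop :=
  Measurable z ∧ ∀ t ∈ TT μ γ,
    IntegrableOn (fun x : ℝ≥0∞ => z x.toNNReal) (Icc 0 (t : ℝ≥0∞)) (μ.map γ)

/-- `F loc≪ G` with density `z = dF/dG` : `F(t) = F(0) + ∫_(0,t] z(s) dG(s)` for `t < t_G`. -/
def LocAC (μ : Measure Ω) (γ : Ω → ℝ≥0∞) (F z : ℝ≥0 → ℝ) : Prop :=
  MemL1loc μ γ z ∧ ∀ t : ℝ≥0, (t : ℝ≥0∞) < tG μ γ →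
    F t = F 0 + ∫ x in Ioc (0 : ℝ≥0∞) (t : ℝ≥0∞), z x.toNNReal ∂(μ.map γ)

/-- Condition M for the pair `(F, H)`. -/
def CondM (μ : Measure Ω) (γ : Ω → ℝ≥0∞) (F H : ℝ≥0 → ℝ) : Prop :=
  (∃ z, LocAC μ γ F z) ∧ MemL1loc μ γ H ∧
  (∀ t : ℝ≥0, (t : ℝ≥0∞) < tG μ γ →
    F t * Gbar μ γ t + ∫ x in Ioc (0 : ℝ≥0∞) (t : ℝ≥0∞), H x.toNNReal ∂(μ.map γ)
      = F 0 * Gbar μ γ 0) ∧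
  (CaseB μ γ → Tendsto F (leftF (tG μ γ)) (𝓝 (H (tG μ γ).toNNReal)))

/-- A stopping time of the single jump filtration: `{T ≤ t} ∈ 𝒻_t` for all `t ∈ ℝ₊`. -/
def IsSJStoppingTime (γ : Ω → ℝ≥0∞) (T : Ω → ℝ≥0∞) : Prop :=
  ∀ t : ℝ≥0, {ω | T ω ≤ (t : ℝ≥0∞)} ∈ jumpColl m γ t

/-- The martingale property on a set `S` of times, w.r.t. the single jump filtration. -/
def MartingaleOn (μ : Measure Ω) (γ : Ω → ℝ≥0∞) (M : ℝ≥0 → Ω → ℝ) (S : Set ℝ≥0) : Prop :=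
  (∀ t ∈ S, Measurable[jumpσ m γ t] (M t)) ∧ (∀ t ∈ S, Integrable (M t) μ) ∧
    ∀ s ∈ S, ∀ t ∈ S, s ≤ t → μ[M t|jumpσ m γ s] =ᵐ[μ] M s

/-- A uniformly integrable martingale w.r.t. the single jump filtration. -/
def UIMartingale (μ : Measure Ω) (γ : Ω → ℝ≥0∞) (M : ℝ≥0 → Ω → ℝ) : Prop :=
  MartingaleOn μ γ M Set.univ ∧ UniformIntegrable M 1 μ

/-- A local martingale w.r.t. the single jump filtration: adapted, a.s. càdlàg paths, and
there are stopping times `T n ↑ ∞` a.s. with each stopped process a UI martingale. -/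
def LocalMartingale (μ : Measure Ω) (γ : Ω → ℝ≥0∞) (M : ℝ≥0 → Ω → ℝ) : Prop :=
  (∀ t : ℝ≥0, Measurable[jumpσ m γ t] (M t)) ∧
  (∀ᵐ ω ∂μ, Cadlag fun t => M t ω) ∧
  ∃ T : ℕ → Ω → ℝ≥0∞,
    (∀ n, IsSJStoppingTime γ (T n)) ∧
    (∀ᵐ ω ∂μ, Monotone (fun n => T n ω) ∧ Tendsto (fun n => T n ω) atTop (𝓝 (⊤ : ℝ≥0∞))) ∧
    ∀ n, UIMartingale μ γ (stopped M (T n))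

/-- `E[L' | γ] = 0` for a (possibly only locally integrable) random variable `L'`. -/
def CondZeroGivenGamma (μ : Measure Ω) (γ : Ω → ℝ≥0∞) (L' : Ω → ℝ) : Prop :=
  ∀ B : Set ℝ≥0∞, MeasurableSet B → IntegrableOn L' (γ ⁻¹' B) μ →
    ∫ ω in γ ⁻¹' B, L' ω ∂μ = 0


/-- **Proposition 1 (iv).** A random variable `T` with values in `[0,∞]` is a stopping time
of the single jump filtration iff: whenever `{T < γ}` is nonempty, there is a number `r`
with `{T < γ} = {T = r < γ} = {r < γ}`. -/
theorem stmt_3 (μ : Measure Ω) [IsProbabilityMeasure μ] (γ : Ω → ℝ≥0∞)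
    (hγ : Measurable γ) (hpos : 0 < μ {ω | 0 < γ ω})
    (T : Ω → ℝ≥0∞) (hT : Measurable T) :
    IsSJStoppingTime γ T ↔
      ({ω | T ω < γ ω}.Nonempty →
        ∃ r : ℝ≥0,
          {ω | T ω < γ ω} = {ω | T ω = (r : ℝ≥0∞) ∧ (r : ℝ≥0∞) < γ ω} ∧
          {ω | T ω < γ ω} = {ω | (r : ℝ≥0∞) < γ ω}) := by
  constructor
  · intro hst hne
    set S : Set ℝ≥0 := {t | {ω | (t : ℝ≥0∞) < γ ω} ⊆ {ω | T ω ≤ (t : ℝ≥0∞)}} with hSdef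
    -- if the intersection {T ≤ t} ∩ {γ > t} is nonempty then t ∈ S
    have hmem : ∀ t : ℝ≥0, (∃ ω, T ω ≤ (t : ℝ≥0∞) ∧ (t : ℝ≥0∞) < γ ω) → t ∈ S := by
      rintro t ⟨ω, h1, h2⟩
      obtain ⟨_, hc | hc⟩ := hst t
      · exact absurd (hc ▸ (⟨h1, h2⟩ : ω ∈ {ω | T ω ≤ (t : ℝ≥0∞)} ∩ jumpSet γ t))
          (Set.notMem_empty ω)
      · intro ω' hω'
        have hω'' : ω' ∈ {ω | T ω ≤ (t : ℝ≥0∞)} ∩ jumpSet γ t := by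
          rw [hc]; exact hω'
        exact hω''.1
    -- S is nonempty
    obtain ⟨ω₀, hω₀⟩ := hne
    have hT0 : T ω₀ ≠ ⊤ := ne_top_of_lt hω₀
    have ht0 : ((T ω₀).toNNReal : ℝ≥0∞) = T ω₀ := ENNReal.coe_toNNReal hT0
    have hSne : S.Nonempty :=
      ⟨(T ω₀).toNNReal, hmem _ ⟨ω₀, le_of_eq ht0.symm, by rw [ht0]; exact hω₀⟩⟩
    set r : ℝ≥0 := sInf S with hrdef
    -- S is upward closed
    have hup : ∀ {s t : ℝ≥0}, s ∈ S → s ≤ t → t ∈ S := by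
      intro s t hs hst' ω hω
      have h1 : (s : ℝ≥0∞) < γ ω := lt_of_le_of_lt (ENNReal.coe_le_coe.mpr hst') hω
      exact le_trans (hs h1) (ENNReal.coe_le_coe.mpr hst')
    -- key lemma A: if r < γ ω then T ω ≤ r
    have hA : ∀ ω, (r : ℝ≥0∞) < γ ω → T ω ≤ (r : ℝ≥0∞) := by
      intro ω h
      by_contra h'
      push_neg at h'
      have hb : (r : ℝ≥0∞) < min (T ω) (γ ω) := lt_min h' h
      obtain ⟨t, ht1, ht2⟩ := ENNReal.lt_iff_exists_nnreal_btwn.mp hb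
      have htr : r < t := ENNReal.coe_lt_coe.mp ht1
      obtain ⟨s, hsS, hst'⟩ := exists_lt_of_csInf_lt hSne htr
      have htS : t ∈ S := hup hsS hst'.le
      have : T ω ≤ (t : ℝ≥0∞) := htS (lt_of_lt_of_le ht2 (min_le_right _ _))
      exact absurd (lt_of_le_of_lt this (lt_of_lt_of_le ht2 (min_le_left _ _)))
        (lt_irrefl _)
    -- key lemma B: if T ω < γ ω then T ω = r
    have hB : ∀ ω, T ω < γ ω → T ω = (r : ℝ≥0∞) := by
      intro ω h
      have hTne : T ω ≠ ⊤ := ne_top_of_lt h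
      have htω : ((T ω).toNNReal : ℝ≥0∞) = T ω := ENNReal.coe_toNNReal hTne
      have hS' : (T ω).toNNReal ∈ S := hmem _ ⟨ω, le_of_eq htω.symm, by rw [htω]; exact h⟩
      have hrle : r ≤ (T ω).toNNReal := csInf_le (OrderBot.bddBelow S) hS'
      have h1 : (r : ℝ≥0∞) ≤ T ω := by rw [← htω]; exact_mod_cast hrle
      exact le_antisymm (hA ω (lt_of_le_of_lt h1 h)) h1
    refine ⟨r, ?_, ?_⟩
    · ext ω
      constructor
      · intro h
        exact ⟨hB ω h, (hB ω h) ▸ h⟩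
      · rintro ⟨h1, h2⟩
        show T ω < γ ω
        rw [h1]; exact h2
    · ext ω
      constructor
      · intro h
        show (r : ℝ≥0∞) < γ ω
        rw [← hB ω h]; exact h
      · intro h
        exact lt_of_le_of_lt (hA ω h) h
  · intro hcond t
    refine ⟨hT measurableSet_Iic, ?_⟩
    by_cases hne : {ω | T ω < γ ω}.Nonempty
    · obtain ⟨r, heq1, heq2⟩ := hcond hne
      rw [Set.ext_iff] at heq1 heq2
      by_cases hrt : r ≤ t
      · right
        apply Set.inter_eq_right.mpr
        intro ω hω
        have h1 : (r : ℝ≥0∞) < γ ω :=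
          lt_of_le_of_lt (ENNReal.coe_le_coe.mpr hrt) hω
        have h2 : T ω < γ ω := (heq2 ω).mpr h1
        have h3 : T ω = (r : ℝ≥0∞) := ((heq1 ω).mp h2).1
        show T ω ≤ (t : ℝ≥0∞)
        rw [h3]; exact_mod_cast hrt
      · left
        rw [Set.eq_empty_iff_forall_notMem]
        rintro ω ⟨h1, h2⟩
        have h3 : T ω < γ ω := lt_of_le_of_lt h1 h2
        have h4 : T ω = (r : ℝ≥0∞) := ((heq1 ω).mp h3).1
        have : T ω ≤ (t : ℝ≥0∞) := h1
        rw [h4] at this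
        exact hrt (ENNReal.coe_le_coe.mp this)
    · left
      rw [Set.eq_empty_iff_forall_notMem]
      rintro ω ⟨h1, h2⟩
      exact hne ⟨ω, show T ω < γ ω from lt_of_le_of_lt (show T ω ≤ (t:ℝ≥0∞) from h1) h2⟩

end WithMeasurableSpace

end SingleJump
end
end

section
/- Let X = (X_t)_{t ∈ ℝ₊} be an 𝔽-adapted process almost all of whose paths are càdlàg and of finite variation on every compact interval, and let F(t), 0 ≤ t < t_G, be the deterministic function with X_t = F(t) on {t < γ ∧ t_G}. Then F has finite total variation over [0, t] for every t < t_G in Case A, and finite total variation over the whole interval [0, t_G) in Case B. -/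
open MeasureTheory Filter Set Topology
open scoped ENNReal NNReal Classical

noncomputable section

namespace SingleJump

variable {Ω : Type*}

section WithMeasurableSpace

variable [m : MeasurableSpace Ω]

/-- Helper: from a positive-measure set and an a.e. property, extract a witness. -/
lemma exists_mem_of_pos {μ : Measure Ω} {A : Set Ω} (hA : 0 < μ A) {P : Ω → Prop}
    (hP : ∀ᵐ ω ∂μ, P ω) : ∃ ω ∈ A, P ω := by
  rw [ae_iff] at hP
  have h2 : μ (A \ {ω | ¬ P ω}) = μ A := measure_diff_null hP
  obtain ⟨ω, hω⟩ := nonempty_of_measure_ne_zero (h2 ▸ hA.ne')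
  exact ⟨ω, hω.1, not_not.mp hω.2⟩

/-- Helper: if `t < t_G` then `P(γ > t) > 0`. -/
lemma pos_of_lt_tG {μ : Measure Ω} [IsProbabilityMeasure μ] {γ : Ω → ℝ≥0∞}
    (hγ : Measurable γ) {t : ℝ≥0} (ht : (t : ℝ≥0∞) < tG μ γ) :
    0 < μ {ω | (t : ℝ≥0∞) < γ ω} := by
  obtain ⟨b, ⟨t', ht', rfl⟩, htb⟩ := lt_sSup_iff.mp ht
  have ht'' : (t : ℝ≥0∞) < (t' : ℝ≥0∞) := htb
  have hmeas : MeasurableSet {ω | γ ω ≤ (t' : ℝ≥0∞)} := hγ measurableSet_Iic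
  have hcpos : 0 < μ ({ω | γ ω ≤ (t' : ℝ≥0∞)}ᶜ) := by
    rw [prob_compl_eq_one_sub hmeas]
    exact tsub_pos_iff_lt.mpr ht'
  refine lt_of_lt_of_le hcpos (measure_mono fun ω hω => ?_)
  exact lt_of_lt_of_le ht'' (lt_of_not_ge (by simpa using hω)).le

/-- **Proposition 2 (iii).** If `X` is an adapted process with a.s. càdlàg paths of finite
variation on compacts, and `F` is the deterministic function with `X_t = F(t)` on
`{t < γ ∧ t_G}`, then `F` has finite variation over `[0,t]` for every `t < t_G` in Case A,
and over `[0, t_G)` in Case B. -/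
theorem stmt_5 (μ : Measure Ω) [IsProbabilityMeasure μ] (γ : Ω → ℝ≥0∞)
    (hγ : Measurable γ) (hpos : 0 < μ {ω | 0 < γ ω})
    (X : ℝ≥0 → Ω → ℝ) (hX : ∀ t : ℝ≥0, Measurable[jumpσ m γ t] (X t))
    (hpaths : ∀ᵐ ω ∂μ, Cadlag (fun t => X t ω) ∧
      ∀ t : ℝ≥0, eVariationOn (fun s => X s ω) (Icc 0 t) < ⊤)
    (F : ℝ≥0 → ℝ)
    (hF : ∀ t : ℝ≥0, (t : ℝ≥0∞) < tG μ γ → ∀ ω, (t : ℝ≥0∞) < γ ω → X t ω = F t) :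
    (CaseA μ γ → ∀ t : ℝ≥0, (t : ℝ≥0∞) < tG μ γ → eVariationOn F (Icc 0 t) < ⊤) ∧
    (CaseB μ γ → eVariationOn F {s : ℝ≥0 | (s : ℝ≥0∞) < tG μ γ} < ⊤) := by
  constructor
  · intro _ t ht
    obtain ⟨ω, hωA, hωP⟩ := exists_mem_of_pos (pos_of_lt_tG hγ ht) hpaths
    have heq : EqOn F (fun s => X s ω) (Icc 0 t) := fun s hs =>
      (hF s (lt_of_le_of_lt (ENNReal.coe_le_coe.mpr hs.2) ht) ω
        (lt_of_le_of_lt (ENNReal.coe_le_coe.mpr hs.2) hωA)).symm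
    rw [eVariationOn.eq_of_eqOn heq]
    exact hωP.2 t
  · intro hB
    obtain ⟨ω, hωA, hωP⟩ := exists_mem_of_pos hB hpaths
    obtain ⟨hγω, htop⟩ := hωA
    have heq : EqOn F (fun s => X s ω) {s : ℝ≥0 | (s : ℝ≥0∞) < tG μ γ} := fun s hs =>
      (hF s hs ω (hγω ▸ hs)).symm
    rw [eVariationOn.eq_of_eqOn heq]
    refine lt_of_le_of_lt (eVariationOn.mono _ fun s hs => ?_) (hωP.2 (tG μ γ).toNNReal)
    have : (s : ℝ≥0∞) ≤ ((tG μ γ).toNNReal : ℝ≥0∞) := by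
      rw [ENNReal.coe_toNNReal htop.ne]
      exact le_of_lt hs
    exact ⟨zero_le, ENNReal.coe_le_coe.mp this⟩

end WithMeasurableSpace

end SingleJump
end
end

section
/- Let F(t), 0 ≤ t < t_G, be a deterministic càdlàg function, L a random variable, and define M_t = F(t)·1_{t<γ} + L·1_{t≥γ} for t ∈ ℝ₊. Then the following are equivalent: (i) M = (M_t)_{t ∈ ℝ₊} is a local martingale with respect to 𝔽; (ii) (M_t)_{t ∈ 𝒯} is a martingale with respect to (𝒻_t)_{t ∈ 𝒯}; (iii) E|M_t| < ∞ and E(M_t) = E(M_0) for every t ∈ 𝒯. -/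
open MeasureTheory Filter Set Topology
open scoped ENNReal NNReal Classical

noncomputable section

namespace SingleJump

variable {Ω : Type*}

section WithMeasurableSpace

variable [m : MeasurableSpace Ω]

section AuxA
variable {γ : Ω → ℝ≥0∞} {t s : ℝ≥0}

lemma mem_jumpColl_of_measurableSet {A : Set Ω} (h : MeasurableSet[jumpσ m γ t] A) :
    A ∈ jumpColl m γ t := by
  refine MeasurableSpace.generateFrom_induction (C := jumpColl m γ t)
    (fun A _ => A ∈ jumpColl m γ t) (fun A hA _ => hA) ⟨MeasurableSet.empty, Or.inl (by simp)⟩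
    ?_ ?_ A h
  · rintro A _ ih
    refine ⟨ih.1.compl, ?_⟩
    rcases ih.2 with h1 | h1
    · refine Or.inr (Set.inter_eq_right.2 fun x hx => ?_)
      intro hxA
      exact absurd (Set.mem_inter hxA hx) (by simp [h1])
    · refine Or.inl ?_
      have : jumpSet γ t ⊆ A := by rw [← h1]; exact Set.inter_subset_left
      ext x; simp only [Set.mem_inter_iff, Set.mem_compl_iff, Set.mem_empty_iff_false,
        iff_false, not_and]
      exact fun hxA hx => hxA (this hx)
  · rintro f _ ih
    refine ⟨MeasurableSet.iUnion fun n => (ih n).1, ?_⟩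
    by_cases hc : ∃ n, f n ∩ jumpSet γ t = jumpSet γ t
    · obtain ⟨n, hn⟩ := hc
      refine Or.inr (Set.inter_eq_right.2 fun x hx => ?_)
      exact Set.mem_iUnion.2 ⟨n, (hn.symm.subset hx).1⟩
    · refine Or.inl ?_
      push_neg at hc
      have : ∀ n, f n ∩ jumpSet γ t = ∅ := fun n => ((ih n).2).resolve_right (hc n)
      rw [Set.iUnion_inter]
      simpa using this

lemma measurableSet_jumpσ {A : Set Ω} (h : A ∈ jumpColl m γ t) :
    MeasurableSet[jumpσ m γ t] A := MeasurableSpace.measurableSet_generateFrom h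

lemma jumpσ_le : jumpσ m γ t ≤ m :=
  MeasurableSpace.generateFrom_le fun _ hA => hA.1

lemma jumpColl_mono (hst : s ≤ t) : jumpColl m γ s ⊆ jumpColl m γ t := by
  intro A hA
  refine ⟨hA.1, ?_⟩
  have hsub : jumpSet γ t ⊆ jumpSet γ s := fun x hx =>
    lt_of_le_of_lt (ENNReal.coe_le_coe.2 hst) hx
  rcases hA.2 with h1 | h1
  · exact Or.inl (Set.eq_empty_of_subset_empty (h1 ▸ Set.inter_subset_inter_right A hsub))
  · have : jumpSet γ s ⊆ A := by rw [← h1]; exact Set.inter_subset_left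
    exact Or.inr (Set.inter_eq_right.2 fun x hx => this (hsub hx))

lemma jumpσ_mono (hst : s ≤ t) : jumpσ m γ s ≤ jumpσ m γ t :=
  MeasurableSpace.generateFrom_mono (jumpColl_mono hst)

lemma measurable_jumpSet (hγ : Measurable γ) : MeasurableSet (jumpSet γ t) :=
  measurableSet_lt measurable_const hγ

lemma jumpSet_mem_jumpColl (hγ : Measurable γ) : jumpSet γ t ∈ jumpColl m γ t :=
  ⟨measurable_jumpSet hγ, Or.inr (Set.inter_self _)⟩

/-- A measurable function which is constant on `{γ > t}` is `𝒻_t`-measurable. -/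
lemma measurable_jumpσ_of_constant (hγ : Measurable γ) {g : Ω → ℝ} (hg : Measurable g)
    {c : ℝ} (hc : ∀ ω, (t : ℝ≥0∞) < γ ω → g ω = c) : Measurable[jumpσ m γ t] g := by
  intro B hB
  have hpre : g ⁻¹' B = (g ⁻¹' B ∩ (jumpSet γ t)ᶜ) ∪ (if c ∈ B then jumpSet γ t else ∅) := by
    ext ω
    by_cases hω : (t : ℝ≥0∞) < γ ω
    · simp only [Set.mem_preimage, Set.mem_union, Set.mem_inter_iff, Set.mem_compl_iff]
      have hgc := hc ω hω
      by_cases hcB : c ∈ B <;> simp [hcB, hgc, hω, jumpSet]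
    · by_cases hcB : c ∈ B <;> simp [hcB, jumpSet, hω]
  rw [hpre]
  refine MeasurableSet.union (measurableSet_jumpσ ?_) ?_
  · refine ⟨(hg hB).inter (measurable_jumpSet hγ).compl, Or.inl ?_⟩
    ext x; simp only [Set.mem_inter_iff, Set.mem_compl_iff, Set.mem_empty_iff_false, iff_false,
      not_and]
    tauto
  · split
    · exact measurableSet_jumpσ (jumpSet_mem_jumpColl hγ)
    · exact @MeasurableSet.empty _ (jumpσ m γ t)

end AuxA

section AuxB
variable {γ : Ω → ℝ≥0∞} {μ : Measure Ω} {t s : ℝ≥0}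

lemma mem_TT_of_le (ht : t ∈ TT μ γ) (hst : s ≤ t) : s ∈ TT μ γ :=
  lt_of_lt_of_le ht (measure_mono fun ω hω => le_trans (ENNReal.coe_le_coe.2 hst) hω)

lemma zero_mem_TT [IsProbabilityMeasure μ] : (0 : ℝ≥0) ∈ TT μ γ := by
  have : {ω : Ω | ((0 : ℝ≥0) : ℝ≥0∞) ≤ γ ω} = Set.univ := by
    ext ω; simp
  simp only [TT, Set.mem_setOf_eq, this, measure_univ]
  norm_num

lemma mem_TT_of_lt_tG [IsProbabilityMeasure μ] (h : (t : ℝ≥0∞) < tG μ γ) : t ∈ TT μ γ := by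
  obtain ⟨b, ⟨s, hs, rfl⟩, hts⟩ := lt_sSup_iff.1 h
  by_contra h0
  simp only [TT, Set.mem_setOf_eq, not_lt, le_zero_iff] at h0
  have hcover : (Set.univ : Set Ω) ⊆ {ω | γ ω ≤ (s : ℝ≥0∞)} ∪ {ω | (t : ℝ≥0∞) ≤ γ ω} := by
    intro ω _
    rcases le_or_gt (t : ℝ≥0∞) (γ ω) with h1 | h1
    · exact Or.inr h1
    · exact Or.inl (le_trans h1.le hts.le)
  have h1 : (1 : ℝ≥0∞) ≤ μ {ω | γ ω ≤ (s : ℝ≥0∞)} + μ {ω | (t : ℝ≥0∞) ≤ γ ω} := by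
    calc (1 : ℝ≥0∞) = μ Set.univ := (measure_univ).symm
    _ ≤ μ ({ω | γ ω ≤ (s : ℝ≥0∞)} ∪ {ω | (t : ℝ≥0∞) ≤ γ ω}) := measure_mono hcover
    _ ≤ _ := measure_union_le _ _
  rw [h0, add_zero] at h1
  exact absurd (lt_of_le_of_lt h1 hs) (lt_irrefl _)

lemma le_tG_of_mem_TT [IsProbabilityMeasure μ] (hγ : Measurable γ) (ht : t ∈ TT μ γ) :
    (t : ℝ≥0∞) ≤ tG μ γ := by
  by_contra hlt
  push_neg at hlt
  obtain ⟨s, hs1, hs2⟩ := ENNReal.lt_iff_exists_nnreal_btwn.1 hlt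
  have hst : s < t := by exact_mod_cast hs2
  have hsS : μ {ω | γ ω ≤ (s : ℝ≥0∞)} < 1 := by
    have hmeas : MeasurableSet {ω | γ ω ≤ (s : ℝ≥0∞)} := hγ measurableSet_Iic
    have hsum : μ {ω | γ ω ≤ (s : ℝ≥0∞)} + μ {ω | γ ω ≤ (s : ℝ≥0∞)}ᶜ = 1 := by
      rw [measure_add_measure_compl hmeas, measure_univ]
    rcases lt_or_ge (μ {ω | γ ω ≤ (s : ℝ≥0∞)}) 1 with h | h
    · exact h
    · exfalso
      have hsub : {ω | (t : ℝ≥0∞) ≤ γ ω} ⊆ {ω | γ ω ≤ (s : ℝ≥0∞)}ᶜ := by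
        intro ω hω
        simp only [Set.mem_compl_iff, Set.mem_setOf_eq, not_le]
        exact lt_of_lt_of_le (ENNReal.coe_lt_coe.2 hst) hω
      have hc : 0 < μ {ω | γ ω ≤ (s : ℝ≥0∞)}ᶜ := lt_of_lt_of_le ht (measure_mono hsub)
      have : (1 : ℝ≥0∞) < μ {ω | γ ω ≤ (s : ℝ≥0∞)} + μ {ω | γ ω ≤ (s : ℝ≥0∞)}ᶜ := by
        calc (1 : ℝ≥0∞) = 1 + 0 := by simp
        _ < μ {ω | γ ω ≤ (s : ℝ≥0∞)} + μ {ω | γ ω ≤ (s : ℝ≥0∞)}ᶜ :=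
          ENNReal.add_lt_add_of_le_of_lt ENNReal.one_ne_top h hc
      rw [hsum] at this
      exact absurd this (lt_irrefl _)
  have hle : ((s : ℝ≥0) : ℝ≥0∞) ≤ tG μ γ := le_sSup (Set.mem_image_of_mem _ hsS)
  exact absurd (lt_of_le_of_lt hle hs1) (lt_irrefl _)

lemma measure_ge_eq_zero_of_tG_lt [IsProbabilityMeasure μ] (hγ : Measurable γ)
    (h : tG μ γ < (t : ℝ≥0∞)) : μ {ω | (t : ℝ≥0∞) ≤ γ ω} = 0 := by
  by_contra h0
  exact absurd (lt_of_le_of_lt (le_tG_of_mem_TT hγ (pos_iff_ne_zero.2 h0)) h) (lt_irrefl _)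

lemma ae_le_tG [IsProbabilityMeasure μ] (hγ : Measurable γ) : ∀ᵐ ω ∂μ, γ ω ≤ tG μ γ := by
  rw [ae_iff]
  set A : ℚ → Set Ω := fun q =>
    {ω | tG μ γ < ((Real.toNNReal q : ℝ≥0) : ℝ≥0∞) ∧ ((Real.toNNReal q : ℝ≥0) : ℝ≥0∞) ≤ γ ω}
  have hsub : {ω | ¬ γ ω ≤ tG μ γ} ⊆ ⋃ q : ℚ, A q := by
    intro ω hω
    simp only [Set.mem_setOf_eq, not_le] at hω
    obtain ⟨q, _, hq1, hq2⟩ := ENNReal.lt_iff_exists_rat_btwn.1 hω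
    exact Set.mem_iUnion.2 ⟨q, hq1, hq2.le⟩
  refine measure_mono_null hsub (measure_iUnion_null fun q => ?_)
  by_cases hq : tG μ γ < ((Real.toNNReal q : ℝ≥0) : ℝ≥0∞)
  · exact measure_mono_null (fun ω hω => hω.2) (measure_ge_eq_zero_of_tG_lt hγ hq)
  · have : A q = ∅ := by
      ext ω; simp only [A, Set.mem_setOf_eq, Set.mem_empty_iff_false, iff_false, not_and]
      exact fun h => absurd h hq
    simp [this]

lemma tG_pos [IsProbabilityMeasure μ] (hγ : Measurable γ) (hpos : 0 < μ {ω | 0 < γ ω}) :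
    0 < tG μ γ := by
  have hsub : {ω | 0 < γ ω} ⊆ ⋃ n : ℕ, {ω | (((n : ℝ≥0) + 1)⁻¹ : ℝ≥0∞) ≤ γ ω} := by
    intro ω hω
    obtain ⟨n, hn⟩ := ENNReal.exists_inv_nat_lt (ne_of_gt hω)
    refine Set.mem_iUnion.2 ⟨n, le_trans ?_ hn.le⟩
    rw [ENNReal.inv_le_inv]
    push_cast
    simp
  have : ∃ n : ℕ, 0 < μ {ω | (((n : ℝ≥0) + 1)⁻¹ : ℝ≥0∞) ≤ γ ω} := by
    by_contra hc
    push_neg at hc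
    simp only [le_zero_iff] at hc
    exact absurd (measure_mono_null hsub (measure_iUnion_null hc)) (ne_of_gt hpos)
  obtain ⟨n, hn⟩ := this
  have hmem : ((n : ℝ≥0) + 1)⁻¹ ∈ TT μ γ := by
    have : ((((n : ℝ≥0) + 1)⁻¹ : ℝ≥0) : ℝ≥0∞) = (((n : ℝ≥0) + 1)⁻¹ : ℝ≥0∞) := by
      rw [ENNReal.coe_inv (by positivity)]
      push_cast
      ring_nf
    simpa [TT, this] using hn
  refine lt_of_lt_of_le ?_ (le_tG_of_mem_TT hγ hmem)
  have : (0:ℝ≥0) < ((n : ℝ≥0) + 1)⁻¹ := by positivity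
  exact_mod_cast this

end AuxB

section AuxC
variable {γ : Ω → ℝ≥0∞} {μ : Measure Ω} {t s : ℝ≥0}
variable {F : ℝ≥0 → ℝ} {L : Ω → ℝ}

/-- Adaptedness of the single jump process. -/
lemma adapted_sjp (hγ : Measurable γ) (hL : Measurable L) (t : ℝ≥0) :
    Measurable[jumpσ m γ t] (fun ω => if (t : ℝ≥0∞) < γ ω then F t else L ω) := by
  refine measurable_jumpσ_of_constant hγ ?_ (c := F t) (fun ω hω => if_pos hω)
  exact Measurable.ite (measurable_jumpSet hγ) measurable_const hL

lemma sjp_eq_on_le (hst : s ≤ t) {ω : Ω} (hω : γ ω ≤ (s : ℝ≥0∞)) :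
    (if (t : ℝ≥0∞) < γ ω then F t else L ω) = (if (s : ℝ≥0∞) < γ ω then F s else L ω) := by
  rw [if_neg (not_lt.2 (le_trans hω (ENNReal.coe_le_coe.2 hst))), if_neg (not_lt.2 hω)]

/-- Key integral computation : equality of set integrals over `𝒻_s`-sets. -/
lemma setIntegral_eq_sjp [IsProbabilityMeasure μ] (hγ : Measurable γ)
    (hst : s ≤ t)
    (hintt : Integrable (fun ω => if (t : ℝ≥0∞) < γ ω then F t else L ω) μ)
    (hints : Integrable (fun ω => if (s : ℝ≥0∞) < γ ω then F s else L ω) μ)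
    (heq : ∫ ω, (if (t : ℝ≥0∞) < γ ω then F t else L ω) ∂μ
         = ∫ ω, (if (s : ℝ≥0∞) < γ ω then F s else L ω) ∂μ)
    {A : Set Ω} (hA : A ∈ jumpColl m γ s) :
    ∫ ω in A, (if (s : ℝ≥0∞) < γ ω then F s else L ω) ∂μ
      = ∫ ω in A, (if (t : ℝ≥0∞) < γ ω then F t else L ω) ∂μ := by
  set Nt := fun ω => if (t : ℝ≥0∞) < γ ω then F t else L ω with hNt
  set Ns := fun ω => if (s : ℝ≥0∞) < γ ω then F s else L ω with hNs
  have hS : MeasurableSet (jumpSet γ s) := measurable_jumpSet hγ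
  have hdiff : ∀ (B : Set Ω), MeasurableSet B → B ⊆ (jumpSet γ s)ᶜ →
      ∫ ω in B, Ns ω ∂μ = ∫ ω in B, Nt ω ∂μ := by
    intro B hBm hB
    refine setIntegral_congr_fun hBm fun ω hω => ?_
    exact (sjp_eq_on_le hst (not_lt.1 (hB hω))).symm
  have h1 : ∫ ω in A, Ns ω ∂μ
      = ∫ ω in A ∩ jumpSet γ s, Ns ω ∂μ + ∫ ω in A \ jumpSet γ s, Ns ω ∂μ :=
    (integral_inter_add_diff hS hints.integrableOn).symm
  have h2 : ∫ ω in A, Nt ω ∂μ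
      = ∫ ω in A ∩ jumpSet γ s, Nt ω ∂μ + ∫ ω in A \ jumpSet γ s, Nt ω ∂μ :=
    (integral_inter_add_diff hS hintt.integrableOn).symm
  have hdm : MeasurableSet (A \ jumpSet γ s) := hA.1.diff hS
  have hd : ∫ ω in A \ jumpSet γ s, Ns ω ∂μ = ∫ ω in A \ jumpSet γ s, Nt ω ∂μ :=
    hdiff _ hdm (fun ω hω => hω.2)
  rcases hA.2 with hAS | hAS
  · rw [h1, h2, hAS, hd]
    simp
  · have h3 : ∫ ω in jumpSet γ s, Ns ω ∂μ + ∫ ω in (jumpSet γ s)ᶜ, Ns ω ∂μ = ∫ ω, Ns ω ∂μ :=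
      integral_add_compl hS hints
    have h4 : ∫ ω in jumpSet γ s, Nt ω ∂μ + ∫ ω in (jumpSet γ s)ᶜ, Nt ω ∂μ = ∫ ω, Nt ω ∂μ :=
      integral_add_compl hS hintt
    have h5 : ∫ ω in (jumpSet γ s)ᶜ, Ns ω ∂μ = ∫ ω in (jumpSet γ s)ᶜ, Nt ω ∂μ :=
      hdiff _ hS.compl subset_rfl
    rw [h1, h2, hAS]
    have heq' : ∫ ω, Nt ω ∂μ = ∫ ω, Ns ω ∂μ := heq
    have h6 : ∫ ω in jumpSet γ s, Ns ω ∂μ = ∫ ω in jumpSet γ s, Nt ω ∂μ := by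
      linarith
    rw [h6, hd]

end AuxC

section AuxD
variable {γ : Ω → ℝ≥0∞} {μ : Measure Ω} {t s : ℝ≥0}
variable {F : ℝ≥0 → ℝ} {L : Ω → ℝ}

lemma condexp_sjp [IsProbabilityMeasure μ] (hγ : Measurable γ) (hL : Measurable L)
    (hst : s ≤ t)
    (hintt : Integrable (fun ω => if (t : ℝ≥0∞) < γ ω then F t else L ω) μ)
    (hints : Integrable (fun ω => if (s : ℝ≥0∞) < γ ω then F s else L ω) μ)
    (heq : ∫ ω, (if (t : ℝ≥0∞) < γ ω then F t else L ω) ∂μ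
         = ∫ ω, (if (s : ℝ≥0∞) < γ ω then F s else L ω) ∂μ) :
    μ[(fun ω => if (t : ℝ≥0∞) < γ ω then F t else L ω)|jumpσ m γ s] =ᵐ[μ]
      (fun ω => if (s : ℝ≥0∞) < γ ω then F s else L ω) := by
  have hm : jumpσ m γ s ≤ m := jumpσ_le
  haveI : SigmaFinite (μ.trim hm) := by infer_instance
  refine (ae_eq_condExp_of_forall_setIntegral_eq hm hintt
    (fun A _ _ => hints.integrableOn)
    (fun A hA _ => setIntegral_eq_sjp hγ hst hintt hints heq (mem_jumpColl_of_measurableSet hA))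
    ?_).symm
  exact StronglyMeasurable.aestronglyMeasurable (Measurable.stronglyMeasurable (adapted_sjp hγ hL s))

lemma integral_sjp [IsProbabilityMeasure μ] (hγ : Measurable γ)
    (hints : Integrable (fun ω => if (s : ℝ≥0∞) < γ ω then F s else L ω) μ) :
    ∫ ω, (if (s : ℝ≥0∞) < γ ω then F s else L ω) ∂μ
      = F s * (μ (jumpSet γ s)).toReal + ∫ ω in (jumpSet γ s)ᶜ, L ω ∂μ := by
  have hS : MeasurableSet (jumpSet γ s) := measurable_jumpSet hγ
  rw [← integral_add_compl hS hints]
  congr 1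
  · have h1 : ∫ x in jumpSet γ s, (if (s : ℝ≥0∞) < γ x then F s else L x) ∂μ
        = ∫ _x in jumpSet γ s, F s ∂μ :=
      setIntegral_congr_fun hS (fun ω hω => if_pos hω)
    rw [h1, setIntegral_const, smul_eq_mul, mul_comm]
    rfl
  · exact setIntegral_congr_fun hS.compl fun ω hω => if_neg (by simpa [jumpSet] using hω)

lemma integrableOn_L_of_sjp (hγ : Measurable γ)
    (hints : Integrable (fun ω => if (s : ℝ≥0∞) < γ ω then F s else L ω) μ) :
    IntegrableOn L (jumpSet γ s)ᶜ μ := by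
  have hS : MeasurableSet (jumpSet γ s) := measurable_jumpSet hγ
  refine (hints.integrableOn (s := (jumpSet γ s)ᶜ)).congr_fun ?_ hS.compl
  intro ω hω
  exact (if_neg (by simpa [jumpSet] using hω))

/-- (iii) → (ii). -/
lemma martingaleOn_of_integral_eq [IsProbabilityMeasure μ] (hγ : Measurable γ)
    (hL : Measurable L)
    (hint : ∀ u ∈ TT μ γ, Integrable (fun ω => if (u : ℝ≥0∞) < γ ω then F u else L ω) μ)
    (hmean : ∀ u ∈ TT μ γ, ∫ ω, (if (u : ℝ≥0∞) < γ ω then F u else L ω) ∂μ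
      = ∫ ω, (if ((0 : ℝ≥0) : ℝ≥0∞) < γ ω then F 0 else L ω) ∂μ) :
    MartingaleOn μ γ (fun u ω => if (u : ℝ≥0∞) < γ ω then F u else L ω) (TT μ γ) := by
  refine ⟨fun u _ => adapted_sjp hγ hL u, hint, fun a ha b hb hab => ?_⟩
  exact condexp_sjp hγ hL hab (hint b hb) (hint a ha)
    (by rw [hmean a ha, hmean b hb])

/-- (ii) → (iii). -/
lemma integral_eq_of_martingaleOn [IsProbabilityMeasure μ]
    (hmart : MartingaleOn μ γ (fun u ω => if (u : ℝ≥0∞) < γ ω then F u else L ω) (TT μ γ)) :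
    (∀ u ∈ TT μ γ, Integrable (fun ω => if (u : ℝ≥0∞) < γ ω then F u else L ω) μ) ∧
    ∀ u ∈ TT μ γ, ∫ ω, (if (u : ℝ≥0∞) < γ ω then F u else L ω) ∂μ
      = ∫ ω, (if ((0 : ℝ≥0) : ℝ≥0∞) < γ ω then F 0 else L ω) ∂μ := by
  refine ⟨hmart.2.1, fun u hu => ?_⟩
  have h0 : (0 : ℝ≥0) ∈ TT μ γ := zero_mem_TT
  have hc := hmart.2.2 0 h0 u hu zero_le
  have hm : jumpσ m γ (0 : ℝ≥0) ≤ m := jumpσ_le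
  haveI : SigmaFinite (μ.trim hm) := by infer_instance
  calc ∫ ω, (if (u : ℝ≥0∞) < γ ω then F u else L ω) ∂μ
      = ∫ ω, (μ[(fun ω => if (u : ℝ≥0∞) < γ ω then F u else L ω)|jumpσ m γ (0 : ℝ≥0)]) ω ∂μ :=
        (integral_condExp hm).symm
    _ = ∫ ω, (if ((0 : ℝ≥0) : ℝ≥0∞) < γ ω then F 0 else L ω) ∂μ := integral_congr_ae hc

end AuxD

section AuxE
variable {γ : Ω → ℝ≥0∞} {μ : Measure Ω} {t s : ℝ≥0}
variable {F : ℝ≥0 → ℝ} {L : Ω → ℝ}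

lemma stopped_zero {M : ℝ≥0 → Ω → ℝ} {T : Ω → ℝ≥0∞} : stopped M T 0 = M 0 := by
  funext ω
  simp [stopped]

lemma martingaleOn_integral_eq [IsProbabilityMeasure μ] {M : ℝ≥0 → Ω → ℝ} {S : Set ℝ≥0}
    (hmart : MartingaleOn μ γ M S) (h0 : (0 : ℝ≥0) ∈ S) (ht : t ∈ S) :
    ∫ ω, M t ω ∂μ = ∫ ω, M 0 ω ∂μ := by
  have hc := hmart.2.2 0 h0 t ht zero_le
  have hm : jumpσ m γ (0 : ℝ≥0) ≤ m := jumpσ_le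
  haveI : SigmaFinite (μ.trim hm) := by infer_instance
  calc ∫ ω, M t ω ∂μ = ∫ ω, (μ[M t|jumpσ m γ (0 : ℝ≥0)]) ω ∂μ := (integral_condExp hm).symm
    _ = ∫ ω, M 0 ω ∂μ := integral_congr_ae hc

/-- (i) → (iii). -/
lemma integral_eq_of_localMartingale [IsProbabilityMeasure μ] (hγ : Measurable γ)
    {M : ℝ≥0 → Ω → ℝ}
    (hMdef : ∀ (u : ℝ≥0) (ω : Ω), M u ω = if (u : ℝ≥0∞) < γ ω then F u else L ω)
    (hloc : LocalMartingale μ γ M) :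
    (∀ u ∈ TT μ γ, Integrable (M u) μ) ∧
    ∀ u ∈ TT μ γ, ∫ ω, M u ω ∂μ = ∫ ω, M 0 ω ∂μ := by
  obtain ⟨_, _, T, hSJ, hae, hUI⟩ := hloc
  have key : ∀ u ∈ TT μ γ, ∃ n, stopped M (T n) u = M u := by
    intro u hu
    by_cases hP : ∀ n, ∃ s : ℝ≥0, s < u ∧ jumpSet γ s ⊆ {ω | T n ω ≤ (s : ℝ≥0∞)}
    · exfalso
      choose sq hs1 hs2 using hP
      have hex : ∃ ω, (u : ℝ≥0∞) ≤ γ ω ∧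
          (Monotone (fun n => T n ω) ∧ Tendsto (fun n => T n ω) atTop (𝓝 (⊤ : ℝ≥0∞))) := by
        by_contra hno
        push_neg at hno
        have hsub : {ω | (u : ℝ≥0∞) ≤ γ ω} ⊆
            {ω | ¬ (Monotone (fun n => T n ω) ∧ Tendsto (fun n => T n ω) atTop (𝓝 (⊤ : ℝ≥0∞)))} :=
          fun ω hω => fun hand => (hno ω hω) hand.1 hand.2
        exact absurd (measure_mono_null hsub (ae_iff.1 hae)) (ne_of_gt hu)
      obtain ⟨ω, hωγ, _, hωT⟩ := hex
      have hev : ∀ᶠ n in atTop, (u : ℝ≥0∞) < T n ω :=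
        hωT.eventually (eventually_gt_nhds ENNReal.coe_lt_top)
      obtain ⟨n, hn⟩ := hev.exists
      have hmem : ω ∈ jumpSet γ (sq n) :=
        lt_of_lt_of_le (ENNReal.coe_lt_coe.2 (hs1 n)) hωγ
      exact absurd (lt_of_le_of_lt (hs2 n hmem) (ENNReal.coe_lt_coe.2 (hs1 n)))
        (not_lt.2 hn.le)
    · push_neg at hP
      obtain ⟨n, hn⟩ := hP
      refine ⟨n, funext fun ω => ?_⟩
      have hstop : ∀ s : ℝ≥0, s < u → {ω | T n ω ≤ (s : ℝ≥0∞)} ∩ jumpSet γ s = ∅ := by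
        intro s hsu
        refine ((hSJ n s).2).resolve_right fun hset => ?_
        exact hn s hsu (Set.inter_eq_right.1 hset)
      by_cases h1 : (u : ℝ≥0∞) ≤ T n ω
      · simp [stopped, inf_eq_left.2 h1]
      · push_neg at h1
        have hfin : T n ω ≠ ⊤ := ne_top_of_lt (lt_of_lt_of_le h1 le_top)
        set s := (T n ω).toNNReal with hs
        have hcoe : (s : ℝ≥0∞) = T n ω := ENNReal.coe_toNNReal hfin
        have hsu : s < u := by
          rw [← ENNReal.coe_lt_coe, hcoe]; exact h1
        have hωs : γ ω ≤ (s : ℝ≥0∞) := by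
          by_contra hγs
          push_neg at hγs
          have : ω ∈ {ω | T n ω ≤ (s : ℝ≥0∞)} ∩ jumpSet γ s := ⟨hcoe.ge, hγs⟩
          rw [hstop s hsu] at this
          exact this
        have h2 : (u : ℝ≥0∞) ⊓ T n ω = (s : ℝ≥0∞) := by
          rw [hcoe]; exact inf_eq_right.2 h1.le
        have h3 : γ ω ≤ (u : ℝ≥0∞) := le_trans hωs (le_of_lt (ENNReal.coe_lt_coe.2 hsu))
        simp only [stopped, h2, ENNReal.toNNReal_coe, hMdef]
        rw [if_neg (not_lt.2 hωs), if_neg (not_lt.2 h3)]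
  constructor
  · intro u hu
    obtain ⟨n, hn⟩ := key u hu
    exact hn ▸ ((hUI n).1.2.1 u trivial)
  · intro u hu
    obtain ⟨n, hn⟩ := key u hu
    have := martingaleOn_integral_eq (hUI n).1 trivial (t := u) trivial
    rwa [hn, stopped_zero] at this

end AuxE

section AuxF
variable {γ : Ω → ℝ≥0∞} {μ : Measure Ω}
variable {F : ℝ≥0 → ℝ} {L : Ω → ℝ}

lemma tG_ne_top_of_caseB (hB : 0 < μ {ω | γ ω = tG μ γ ∧ tG μ γ < ⊤}) : tG μ γ ≠ ⊤ := by
  intro h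
  have he : {ω | γ ω = tG μ γ ∧ tG μ γ < ⊤} = ∅ := by
    ext ω; simp [h]
  rw [he] at hB
  simp at hB

lemma toNNReal_tG_mem_TT_of_caseB (hB : 0 < μ {ω | γ ω = tG μ γ ∧ tG μ γ < ⊤}) :
    (tG μ γ).toNNReal ∈ TT μ γ := by
  refine lt_of_lt_of_le hB (measure_mono fun ω hω => ?_)
  simp only [Set.mem_setOf_eq, ENNReal.coe_toNNReal (tG_ne_top_of_caseB hB)]
  exact hω.1.ge

lemma caseB_left_limit [IsProbabilityMeasure μ] (hγ : Measurable γ)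
    (hB : 0 < μ {ω | γ ω = tG μ γ ∧ tG μ γ < ⊤})
    (hint : ∀ u ∈ TT μ γ, Integrable (fun ω => if (u : ℝ≥0∞) < γ ω then F u else L ω) μ)
    (hmean : ∀ u ∈ TT μ γ, ∫ ω, (if (u : ℝ≥0∞) < γ ω then F u else L ω) ∂μ
        = ∫ ω, (if ((0 : ℝ≥0) : ℝ≥0∞) < γ ω then F 0 else L ω) ∂μ) :
    ∃ c : ℝ, Tendsto F (𝓝[<] (tG μ γ).toNNReal) (𝓝 c) := by
  set b := (tG μ γ).toNNReal with hbdef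
  have hbcoe : (b : ℝ≥0∞) = tG μ γ := ENNReal.coe_toNNReal (tG_ne_top_of_caseB hB)
  have hbTT : b ∈ TT μ γ := toNNReal_tG_mem_TT_of_caseB hB
  rcases eq_or_ne b 0 with h0 | h0
  · refine ⟨0, ?_⟩
    rw [h0]
    have hempty : Iio (0 : ℝ≥0) = ∅ := by
      ext x; simp
    rw [nhdsWithin, hempty]
    simp
  have hIione : (Iio b).Nonempty := ⟨0, pos_iff_ne_zero.2 h0⟩
  have hsTT : ∀ s : ℝ≥0, s < b → s ∈ TT μ γ := fun s hs =>
    mem_TT_of_lt_tG (hbcoe ▸ ENNReal.coe_lt_coe.2 hs)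
  set C := ∫ ω, (if ((0 : ℝ≥0) : ℝ≥0∞) < γ ω then F 0 else L ω) ∂μ with hC
  set φ : ℝ≥0 → ℝ := fun s => (μ (jumpSet γ s)).toReal with hφdef
  set g0 : ℝ := (μ {ω | (b : ℝ≥0∞) ≤ γ ω}).toReal with hg0def
  have hg0 : 0 < g0 := ENNReal.toReal_pos (ne_of_gt hbTT) (measure_ne_top μ _)
  have hg0le : ∀ s : ℝ≥0, s < b → g0 ≤ φ s := by
    intro s hs
    refine ENNReal.toReal_mono (measure_ne_top μ _) (measure_mono fun ω hω => ?_)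
    exact lt_of_lt_of_le (ENNReal.coe_lt_coe.2 hs) hω
  have hφmono : AntitoneOn φ (Iio b) := by
    intro x _ y _ hxy
    refine ENNReal.toReal_mono (measure_ne_top μ _) (measure_mono fun ω hω => ?_)
    exact lt_of_le_of_lt (ENNReal.coe_le_coe.2 hxy) hω
  have hφbdd : BddBelow (φ '' Iio b) := by
    refine ⟨0, ?_⟩
    rintro y ⟨s, _, rfl⟩
    exact ENNReal.toReal_nonneg
  have hφtend := hφmono.tendsto_nhdsLT hφbdd
  set gl := sInf (φ '' Iio b) with hgl
  have hglpos : 0 < gl := by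
    refine lt_of_lt_of_le hg0 (le_csInf (hIione.image _) ?_)
    rintro y ⟨s, hs, rfl⟩
    exact hg0le s hs
  -- the L-part
  have hLb : IntegrableOn L (jumpSet γ b)ᶜ μ := integrableOn_L_of_sjp hγ (hint b hbTT)
  have hsetmono : ∀ {x y : ℝ≥0}, x ≤ y → (jumpSet γ x)ᶜ ⊆ (jumpSet γ y)ᶜ := by
    intro x y hxy ω hω
    simp only [Set.mem_compl_iff, jumpSet, Set.mem_setOf_eq, not_lt] at hω ⊢
    exact le_trans hω (ENNReal.coe_le_coe.2 hxy)
  set P : ℝ≥0 → ℝ := fun s => ∫ ω in (jumpSet γ s)ᶜ, ((Real.toNNReal (L ω) : ℝ)) ∂μ with hP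
  set Q : ℝ≥0 → ℝ := fun s => ∫ ω in (jumpSet γ s)ᶜ, ((Real.toNNReal (-L ω) : ℝ)) ∂μ with hQ
  have hPint : ∀ s : ℝ≥0, s ≤ b → IntegrableOn (fun ω => ((Real.toNNReal (L ω) : ℝ)))
      (jumpSet γ s)ᶜ μ := fun s hs => (hLb.mono_set (hsetmono hs)).real_toNNReal
  have hQint : ∀ s : ℝ≥0, s ≤ b → IntegrableOn (fun ω => ((Real.toNNReal (-L ω) : ℝ)))
      (jumpSet γ s)ᶜ μ := fun s hs => ((hLb.mono_set (hsetmono hs)).neg).real_toNNReal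
  have hPmono : MonotoneOn P (Iio b) := by
    intro x hx y hy hxy
    exact setIntegral_mono_set (hPint y (le_of_lt hy))
      (Filter.Eventually.of_forall fun ω => NNReal.coe_nonneg _)
      ((hsetmono hxy).eventuallyLE)
  have hQmono : MonotoneOn Q (Iio b) := by
    intro x hx y hy hxy
    exact setIntegral_mono_set (hQint y (le_of_lt hy))
      (Filter.Eventually.of_forall fun ω => NNReal.coe_nonneg _)
      ((hsetmono hxy).eventuallyLE)
  have hPbdd : BddAbove (P '' Iio b) := by
    refine ⟨P b, ?_⟩
    rintro y ⟨s, hs, rfl⟩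
    exact setIntegral_mono_set (hPint b le_rfl)
      (Filter.Eventually.of_forall fun ω => NNReal.coe_nonneg _)
      ((hsetmono (le_of_lt hs)).eventuallyLE)
  have hQbdd : BddAbove (Q '' Iio b) := by
    refine ⟨Q b, ?_⟩
    rintro y ⟨s, hs, rfl⟩
    exact setIntegral_mono_set (hQint b le_rfl)
      (Filter.Eventually.of_forall fun ω => NNReal.coe_nonneg _)
      ((hsetmono (le_of_lt hs)).eventuallyLE)
  have hPtend := hPmono.tendsto_nhdsLT hPbdd
  have hQtend := hQmono.tendsto_nhdsLT hQbdd
  have hAeq : ∀ s : ℝ≥0, s < b → F s * φ s + (P s - Q s) = C := by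
    intro s hs
    have h1 := hmean s (hsTT s hs)
    have h2 := integral_sjp (μ := μ) (F := F) (L := L) hγ (hint s (hsTT s hs))
    have h3 : ∫ ω in (jumpSet γ s)ᶜ, L ω ∂μ = P s - Q s :=
      integral_eq_integral_pos_part_sub_integral_neg_part (hLb.mono_set (hsetmono hs.le))
    rw [h2, h3] at h1
    exact h1
  refine ⟨(C - (sSup (P '' Iio b) - sSup (Q '' Iio b))) / gl, ?_⟩
  have htend : Tendsto (fun s => (C - (P s - Q s)) / φ s) (𝓝[<] b)
      (𝓝 ((C - (sSup (P '' Iio b) - sSup (Q '' Iio b))) / gl)) :=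
    Tendsto.div (tendsto_const_nhds.sub (hPtend.sub hQtend)) hφtend (ne_of_gt hglpos)
  refine Tendsto.congr' ?_ htend
  filter_upwards [self_mem_nhdsWithin] with s hs
  have h := hAeq s hs
  have hφpos : φ s ≠ 0 := ne_of_gt (lt_of_lt_of_le hg0 (hg0le s hs))
  rw [div_eq_iff hφpos]
  linarith

end AuxF

section AuxG
variable {γ : Ω → ℝ≥0∞} {μ : Measure Ω}
variable {F : ℝ≥0 → ℝ} {L : Ω → ℝ}

/-- Pointwise càdlàg property of the path of the single jump process. -/
lemma cadlag_path (hFrc : ∀ t : ℝ≥0, (t : ℝ≥0∞) < tG μ γ → ContinuousWithinAt F (Ici t) t)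
    (hFll : ∀ t : ℝ≥0, 0 < t → (t : ℝ≥0∞) < tG μ γ → ∃ c : ℝ, Tendsto F (𝓝[<] t) (𝓝 c))
    {ω : Ω} (h1 : γ ω ≤ tG μ γ)
    (h2 : γ ω = tG μ γ → tG μ γ < ⊤ → ∃ c : ℝ, Tendsto F (𝓝[<] (γ ω).toNNReal) (𝓝 c)) :
    Cadlag (fun t : ℝ≥0 => if (t : ℝ≥0∞) < γ ω then F t else L ω) := by
  set p : ℝ≥0 → ℝ := fun t => if (t : ℝ≥0∞) < γ ω then F t else L ω with hp
  constructor
  · intro t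
    by_cases hlt : (t : ℝ≥0∞) < γ ω
    · have htG : (t : ℝ≥0∞) < tG μ γ := lt_of_lt_of_le hlt h1
      have hU : IsOpen {s : ℝ≥0 | (s : ℝ≥0∞) < γ ω} :=
        IsOpen.preimage ENNReal.continuous_coe isOpen_Iio
      have hev : p =ᶠ[𝓝 t] F := by
        filter_upwards [hU.mem_nhds hlt] with s hs
        exact if_pos hs
      exact (hFrc t htG).congr_of_eventuallyEq
        (hev.filter_mono nhdsWithin_le_nhds) (if_pos hlt)
    · push_neg at hlt
      refine continuousWithinAt_const.congr (f := fun _ => L ω) (fun s hs => ?_) ?_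
      · exact if_neg (not_lt.2 (le_trans hlt (ENNReal.coe_le_coe.2 hs)))
      · exact if_neg (not_lt.2 hlt)
  · intro t ht
    by_cases hle : (t : ℝ≥0∞) ≤ γ ω
    · have hex : ∃ c : ℝ, Tendsto F (𝓝[<] t) (𝓝 c) := by
        by_cases htG : (t : ℝ≥0∞) < tG μ γ
        · exact hFll t ht htG
        · push_neg at htG
          have heq1 : (t : ℝ≥0∞) = tG μ γ := le_antisymm (le_trans hle h1) htG
          have heq2 : γ ω = tG μ γ := le_antisymm h1 (heq1 ▸ hle)
          have hfin : tG μ γ < ⊤ := heq1 ▸ ENNReal.coe_lt_top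
          obtain ⟨c, hc⟩ := h2 heq2 hfin
          refine ⟨c, ?_⟩
          have : (γ ω).toNNReal = t := by
            rw [heq2, ← heq1, ENNReal.toNNReal_coe]
          rwa [this] at hc
      obtain ⟨c, hc⟩ := hex
      refine ⟨c, Tendsto.congr' ?_ hc⟩
      filter_upwards [self_mem_nhdsWithin] with s hs
      exact (if_pos (lt_of_lt_of_le (ENNReal.coe_lt_coe.2 hs) hle)).symm
    · push_neg at hle
      refine ⟨L ω, Tendsto.congr' ?_ tendsto_const_nhds⟩
      have hfin : γ ω ≠ ⊤ := ne_top_of_lt (lt_of_lt_of_le hle le_top)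
      have hg't : (γ ω).toNNReal < t := by
        rw [← ENNReal.coe_lt_coe, ENNReal.coe_toNNReal hfin] at *
        exact hle
      filter_upwards [Ioo_mem_nhdsLT_of_mem (Set.mem_Ioc.2 ⟨hg't, le_refl t⟩)] with s hs
      refine (if_neg (not_lt.2 ?_)).symm
      calc γ ω = ((γ ω).toNNReal : ℝ≥0∞) := (ENNReal.coe_toNNReal hfin).symm
        _ ≤ (s : ℝ≥0∞) := ENNReal.coe_le_coe.2 hs.1.le

end AuxG

section AuxH
variable {γ : Ω → ℝ≥0∞} {μ : Measure Ω}
variable {F : ℝ≥0 → ℝ} {L : Ω → ℝ}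

/-- The deterministic-before-jump stopping time `T_c = ∞ on {γ ≤ c}, c on {γ > c}`. -/
def fixedST (γ : Ω → ℝ≥0∞) (c : ℝ≥0) : Ω → ℝ≥0∞ :=
  fun ω => if γ ω ≤ (c : ℝ≥0∞) then ⊤ else (c : ℝ≥0∞)

lemma isSJStoppingTime_fixedST (hγ : Measurable γ) (c : ℝ≥0) :
    IsSJStoppingTime γ (fixedST γ c) := by
  intro u
  by_cases hcu : c ≤ u
  · have hset : {ω | fixedST γ c ω ≤ (u : ℝ≥0∞)} = jumpSet γ c := by
      ext ω
      by_cases h : γ ω ≤ (c : ℝ≥0∞)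
      · simp [fixedST, h, jumpSet, not_lt.2 h]
      · simp [fixedST, h, jumpSet, not_le.1 h, ENNReal.coe_le_coe.2 hcu]
    rw [hset]
    refine ⟨measurable_jumpSet hγ, Or.inr (Set.inter_eq_right.2 fun ω hω => ?_)⟩
    exact lt_of_le_of_lt (ENNReal.coe_le_coe.2 hcu) hω
  · have hset : {ω | fixedST γ c ω ≤ (u : ℝ≥0∞)} = ∅ := by
      ext ω
      by_cases h : γ ω ≤ (c : ℝ≥0∞)
      · simp [fixedST, h]
      · simp only [fixedST, if_neg h, Set.mem_setOf_eq, Set.mem_empty_iff_false, iff_false]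
        exact fun hc => hcu (ENNReal.coe_le_coe.1 hc)
    rw [hset]
    exact ⟨MeasurableSet.empty, Or.inl (by simp)⟩

lemma monotone_fixedST {ts : ℕ → ℝ≥0} (hts : Monotone ts) (ω : Ω) :
    Monotone fun n => fixedST γ (ts n) ω := by
  intro i j hij
  by_cases hi : γ ω ≤ ((ts i : ℝ≥0) : ℝ≥0∞)
  · have hj : γ ω ≤ ((ts j : ℝ≥0) : ℝ≥0∞) :=
      le_trans hi (ENNReal.coe_le_coe.2 (hts hij))
    simp [fixedST, hi, hj]
  · simp only [fixedST, if_neg hi]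
    by_cases hj : γ ω ≤ ((ts j : ℝ≥0) : ℝ≥0∞)
    · simp [hj]
    · simp [if_neg hj, ENNReal.coe_le_coe.2 (hts hij)]

lemma stopped_fixedST (c : ℝ≥0) :
    stopped (fun (u : ℝ≥0) (ω : Ω) => if (u : ℝ≥0∞) < γ ω then F u else L ω) (fixedST γ c)
      = fun (u : ℝ≥0) (ω : Ω) => if ((u ⊓ c : ℝ≥0) : ℝ≥0∞) < γ ω then F (u ⊓ c) else L ω := by
  funext u ω
  by_cases h : γ ω ≤ (c : ℝ≥0∞)
  · have h1 : (u : ℝ≥0∞) ⊓ fixedST γ c ω = (u : ℝ≥0∞) := by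
      simp [fixedST, h]
    rw [stopped, h1, ENNReal.toNNReal_coe]
    rcases le_or_gt u c with huc | huc
    · rw [inf_eq_left.2 huc]
    · rw [inf_eq_right.2 huc.le]
      rw [if_neg (not_lt.2 (le_trans h (ENNReal.coe_le_coe.2 huc.le))),
        if_neg (not_lt.2 (le_trans h (ENNReal.coe_le_coe.2 le_rfl)))]
  · have h1 : (u : ℝ≥0∞) ⊓ fixedST γ c ω = ((u ⊓ c : ℝ≥0) : ℝ≥0∞) := by
      simp [fixedST, if_neg h, ENNReal.coe_min]
    rw [stopped, h1, ENNReal.toNNReal_coe]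

/-- The truncated process is a UI martingale. -/
lemma uiMartingale_trunc [IsProbabilityMeasure μ] (hγ : Measurable γ) (hL : Measurable L)
    {c : ℝ≥0} (hc : c ∈ TT μ γ)
    (hint : ∀ u ∈ TT μ γ, Integrable (fun ω => if (u : ℝ≥0∞) < γ ω then F u else L ω) μ)
    (hmean : ∀ u ∈ TT μ γ, ∫ ω, (if (u : ℝ≥0∞) < γ ω then F u else L ω) ∂μ
        = ∫ ω, (if ((0 : ℝ≥0) : ℝ≥0∞) < γ ω then F 0 else L ω) ∂μ) :
    UIMartingale μ γ
      (fun (u : ℝ≥0) (ω : Ω) => if ((u ⊓ c : ℝ≥0) : ℝ≥0∞) < γ ω then F (u ⊓ c) else L ω) := by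
  have hmemTT : ∀ u : ℝ≥0, u ⊓ c ∈ TT μ γ := fun u => mem_TT_of_le hc inf_le_right
  have heq2 : ∀ u v : ℝ≥0, u ∈ TT μ γ → v ∈ TT μ γ →
      ∫ ω, (if (u : ℝ≥0∞) < γ ω then F u else L ω) ∂μ
        = ∫ ω, (if (v : ℝ≥0∞) < γ ω then F v else L ω) ∂μ := fun u v hu hv => by
    rw [hmean u hu, hmean v hv]
  constructor
  · refine ⟨fun u _ => ?_, fun u _ => hint (u ⊓ c) (hmemTT u), fun a _ b _ hab => ?_⟩
    · exact (adapted_sjp hγ hL (u ⊓ c)).mono (jumpσ_mono inf_le_left) le_rfl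
    · beta_reduce
      rcases le_or_gt a c with hac | hac
      · have ha' : a ⊓ c = a := inf_eq_left.2 hac
        have hcond := condexp_sjp (t := b ⊓ c) (s := a) hγ hL (le_inf (le_trans (le_of_eq ha'.symm) (le_trans inf_le_left hab)) hac)
          (hint (b ⊓ c) (hmemTT b)) (hint a (ha' ▸ hmemTT a))
          (heq2 _ _ (hmemTT b) (ha' ▸ hmemTT a))
        rw [ha']
        exact hcond
      · have hb' : b ⊓ c = c := inf_eq_right.2 (le_trans hac.le hab)
        have ha' : a ⊓ c = c := inf_eq_right.2 hac.le
        rw [ha', hb']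
        have hm : jumpσ m γ a ≤ m := jumpσ_le
        haveI : SigmaFinite (μ.trim hm) := by infer_instance
        have : μ[(fun ω => if (c : ℝ≥0∞) < γ ω then F c else L ω)|jumpσ m γ a]
            = fun ω => if (c : ℝ≥0∞) < γ ω then F c else L ω :=
          condExp_of_stronglyMeasurable hm
            (Measurable.stronglyMeasurable
              ((adapted_sjp hγ hL c).mono (jumpσ_mono hac.le) le_rfl))
            (hint c hc)
        rw [this]
  · refine UniformIntegrable.ae_eq
      ((hint c hc).uniformIntegrable_condExp (ℱ := fun u : ℝ≥0 => jumpσ m γ (u ⊓ c))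
        fun _ => jumpσ_le) ?_
    intro u
    exact condexp_sjp hγ hL inf_le_right (hint c hc) (hint (u ⊓ c) (hmemTT u))
      (heq2 _ _ hc (hmemTT u))

end AuxH

section AuxI
variable {γ : Ω → ℝ≥0∞} {μ : Measure Ω}
variable {F : ℝ≥0 → ℝ} {L : Ω → ℝ}

lemma ae_not_caseB (hA : μ {ω | γ ω = tG μ γ ∧ tG μ γ < ⊤} = 0) :
    ∀ᵐ ω ∂μ, ¬(γ ω = tG μ γ ∧ tG μ γ < ⊤) := by
  rw [ae_iff]
  simpa only [not_not] using hA

lemma exists_localizing_seq [IsProbabilityMeasure μ] (hγ : Measurable γ)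
    (hpos : 0 < μ {ω | 0 < γ ω}) :
    ∃ ts : ℕ → ℝ≥0, Monotone ts ∧ (∀ n, ts n ∈ TT μ γ) ∧
      ∀ᵐ ω ∂μ, Tendsto (fun n => fixedST γ (ts n) ω) atTop (𝓝 (⊤ : ℝ≥0∞)) := by
  by_cases htop : tG μ γ = ⊤
  · refine ⟨fun n => (n : ℝ≥0), fun i j hij => Nat.cast_le.2 hij, fun n =>
      mem_TT_of_lt_tG (htop ▸ ENNReal.coe_lt_top), Filter.Eventually.of_forall fun ω => ?_⟩
    rw [ENNReal.tendsto_nhds_top_iff_nnreal]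
    intro r
    filter_upwards [(tendsto_natCast_atTop_atTop (R := ℝ≥0)).eventually_gt_atTop r] with n hn
    by_cases h : γ ω ≤ (((n : ℝ≥0)) : ℝ≥0∞)
    · simp only [fixedST, if_pos h]
      exact ENNReal.coe_lt_top
    · simp only [fixedST, if_neg h]
      exact ENNReal.coe_lt_coe.2 hn
  · rcases eq_zero_or_pos (μ {ω | γ ω = tG μ γ ∧ tG μ γ < ⊤}) with hA | hB
    swap
    · set b := (tG μ γ).toNNReal with hbdef
      refine ⟨fun _ => b, monotone_const, fun _ => toNNReal_tG_mem_TT_of_caseB hB, ?_⟩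
      filter_upwards [ae_le_tG hγ] with ω hω
      have hcond : γ ω ≤ (b : ℝ≥0∞) := by
        rwa [ENNReal.coe_toNNReal htop]
      have heq : (fun _ : ℕ => fixedST γ b ω) = fun _ => (⊤ : ℝ≥0∞) := by
        funext n; simp [fixedST, hcond]
      rw [heq]
      exact tendsto_const_nhds
    · set b := (tG μ γ).toNNReal with hbdef
      have hbcoe : (b : ℝ≥0∞) = tG μ γ := ENNReal.coe_toNNReal htop
      have hb0 : 0 < b := ENNReal.toNNReal_pos (ne_of_gt (tG_pos hγ hpos)) htop
      set ts : ℕ → ℝ≥0 := fun n => b - b / ((n : ℝ≥0) + 2) with hts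
      have hdivpos : ∀ n : ℕ, 0 < b / ((n : ℝ≥0) + 2) := fun n =>
        div_pos hb0 (by positivity)
      have hlt : ∀ n, ts n < b := fun n => tsub_lt_self hb0 (hdivpos n)
      have hdivmono : ∀ i j : ℕ, i ≤ j → b / ((j : ℝ≥0) + 2) ≤ b / ((i : ℝ≥0) + 2) := by
        intro i j hij
        gcongr
      have hmono : Monotone ts := fun i j hij => tsub_le_tsub_left (hdivmono i j hij) b
      have htsb : Tendsto ts atTop (𝓝 b) := by
        have hdiv0 : Tendsto (fun n : ℕ => b / ((n : ℝ≥0) + 2)) atTop (𝓝 0) := by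
          have h1 := (tendsto_const_div_atTop_nhds_zero_nat b).comp
            (tendsto_add_atTop_nat 2)
          refine h1.congr fun n => ?_
          simp only [Function.comp_apply]
          norm_cast
        have := Tendsto.sub (tendsto_const_nhds (x := b) (f := atTop)) hdiv0
        simpa using this
      refine ⟨ts, hmono, fun n => mem_TT_of_lt_tG (hbcoe ▸ ENNReal.coe_lt_coe.2 (hlt n)), ?_⟩
      filter_upwards [ae_le_tG hγ, ae_not_caseB hA] with ω h1 h2
      have hlttG : γ ω < tG μ γ :=
        lt_of_le_of_ne h1 fun he => h2 ⟨he, lt_top_iff_ne_top.2 htop⟩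
      have hγfin : γ ω ≠ ⊤ := ne_top_of_lt hlttG
      have hγNNb : (γ ω).toNNReal < b := by
        rw [← ENNReal.coe_lt_coe, ENNReal.coe_toNNReal hγfin, hbcoe]
        exact hlttG
      have hev : ∀ᶠ n in atTop, (γ ω).toNNReal < ts n :=
        htsb.eventually (eventually_gt_nhds hγNNb)
      refine Tendsto.congr' ?_ (tendsto_const_nhds (x := (⊤ : ℝ≥0∞)))
      filter_upwards [hev] with n hn
      have : γ ω ≤ ((ts n : ℝ≥0) : ℝ≥0∞) := by
        rw [← ENNReal.coe_toNNReal hγfin]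
        exact ENNReal.coe_le_coe.2 hn.le
      simp [fixedST, this]

/-- (iii) → (i). -/
lemma localMartingale_of_integral_eq [IsProbabilityMeasure μ] (hγ : Measurable γ)
    (hpos : 0 < μ {ω | 0 < γ ω})
    (hFrc : ∀ t : ℝ≥0, (t : ℝ≥0∞) < tG μ γ → ContinuousWithinAt F (Ici t) t)
    (hFll : ∀ t : ℝ≥0, 0 < t → (t : ℝ≥0∞) < tG μ γ → ∃ c : ℝ, Tendsto F (𝓝[<] t) (𝓝 c))
    (hL : Measurable L)
    (hint : ∀ u ∈ TT μ γ, Integrable (fun ω => if (u : ℝ≥0∞) < γ ω then F u else L ω) μ)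
    (hmean : ∀ u ∈ TT μ γ, ∫ ω, (if (u : ℝ≥0∞) < γ ω then F u else L ω) ∂μ
        = ∫ ω, (if ((0 : ℝ≥0) : ℝ≥0∞) < γ ω then F 0 else L ω) ∂μ) :
    LocalMartingale μ γ (fun (u : ℝ≥0) (ω : Ω) => if (u : ℝ≥0∞) < γ ω then F u else L ω) := by
  refine ⟨fun u => adapted_sjp hγ hL u, ?_, ?_⟩
  · rcases eq_zero_or_pos (μ {ω | γ ω = tG μ γ ∧ tG μ γ < ⊤}) with hA | hB
    · filter_upwards [ae_le_tG hγ, ae_not_caseB hA] with ω hω1 hω2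
      exact cadlag_path hFrc hFll hω1 fun h1 h2 => absurd ⟨h1, h2⟩ hω2
    · have hlim := caseB_left_limit hγ hB hint hmean
      filter_upwards [ae_le_tG hγ] with ω hω1
      refine cadlag_path hFrc hFll hω1 fun h1 _ => ?_
      rw [h1]
      exact hlim
  · obtain ⟨ts, hts_mono, hts_TT, hts_ae⟩ := exists_localizing_seq hγ hpos
    refine ⟨fun n => fixedST γ (ts n), fun n => isSJStoppingTime_fixedST hγ (ts n), ?_, ?_⟩
    · filter_upwards [hts_ae] with ω hω
      exact ⟨monotone_fixedST hts_mono ω, hω⟩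
    · intro n
      rw [stopped_fixedST]
      exact uiMartingale_trunc hγ hL (hts_TT n) hint hmean

end AuxI

/-- **Theorem 2.** For `M_t = F(t)·1_{t<γ} + L·1_{t≥γ}` with `F` càdlàg on `[0, t_G)` and
`L` a random variable, the following are equivalent: (i) `M` is a local martingale;
(ii) `(M_t)_{t ∈ 𝒯}` is a martingale; (iii) `E|M_t| < ∞` and `E(M_t) = E(M_0)` for all
`t ∈ 𝒯`. -/
theorem stmt_6 (μ : Measure Ω) [IsProbabilityMeasure μ] (γ : Ω → ℝ≥0∞)
    (hγ : Measurable γ) (hpos : 0 < μ {ω | 0 < γ ω})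
    (F : ℝ≥0 → ℝ)
    (hFrc : ∀ t : ℝ≥0, (t : ℝ≥0∞) < tG μ γ → ContinuousWithinAt F (Ici t) t)
    (hFll : ∀ t : ℝ≥0, 0 < t → (t : ℝ≥0∞) < tG μ γ → ∃ c : ℝ, Tendsto F (𝓝[<] t) (𝓝 c))
    (L : Ω → ℝ) (hL : Measurable L)
    (M : ℝ≥0 → Ω → ℝ)
    (hM : M = fun (t : ℝ≥0) (ω : Ω) => if (t : ℝ≥0∞) < γ ω then F t else L ω) :
    (LocalMartingale μ γ M ↔ MartingaleOn μ γ M (TT μ γ)) ∧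
    (MartingaleOn μ γ M (TT μ γ) ↔
      ((∀ t ∈ TT μ γ, Integrable (M t) μ) ∧
        ∀ t ∈ TT μ γ, ∫ ω, M t ω ∂μ = ∫ ω, M 0 ω ∂μ)) := by
  subst hM
  refine ⟨⟨?_, ?_⟩, ⟨?_, ?_⟩⟩
  · intro hloc
    obtain ⟨hint, hmean⟩ := integral_eq_of_localMartingale hγ (fun _ _ => rfl) hloc
    exact martingaleOn_of_integral_eq hγ hL hint hmean
  · intro hmart
    obtain ⟨hint, hmean⟩ := integral_eq_of_martingaleOn hmart
    exact localMartingale_of_integral_eq hγ hpos hFrc hFll hL hint hmean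
  · intro hmart
    exact integral_eq_of_martingaleOn hmart
  · rintro ⟨hint, hmean⟩
    exact martingaleOn_of_integral_eq hγ hL hint hmean

end WithMeasurableSpace

end SingleJump
end
end
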